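/- Let D : A → A/J be a ℂ-linear map satisfying the Leibniz rule D(f * g) = π(f)·D(g) + D(f)·π(g) for all f, g ∈ A, let φ(s) = D(δ_s)·π(δ_{s*}), and for s ∈ S define T_s : A/J → A/J by T_s(Φ) = π(δ_s)·Φ·π(δ_{s*}) + φ(s). Then the family {T_s : s ∈ S} is a representation of S, i.e. T_{s t}(Φ) = T_s(T_t(Φ)) for all s, t ∈ S and Φ ∈ A/J, and T_s(φ(t)) = φ(s t) for all s, t ∈ S. -/

import Mathlib

open MonoidAlgebra

/-- An inverse semigroup: a semigroup in which every element `s` has a unique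
generalized inverse `s*` with `s * s* * s = s` and `s* * s * s* = s*`. -/
class InverseSemigroup (S : Type*) extends Semigroup S where
  star : S → S
  star_left : ∀ s : S, s * star s * s = s
  star_right : ∀ s : S, star s * s * star s = star s
  star_unique : ∀ s t : S, s * t * s = s → t * s * t = t → t = star s

variable (S : Type*) [InverseSemigroup S]

/-- The ℂ-linear span in the semigroup algebra `A = MonoidAlgebra ℂ S` of the set
`{δ_{s e t} - δ_{s t} : s, t ∈ S, e ∈ E}`, where `E = {e : e * e = e}` is the set of
idempotents of `S`. -/
noncomputable def J : Submodule ℂ (MonoidAlgebra ℂ S) :=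
  Submodule.span ℂ { x | ∃ s t e : S, e * e = e ∧
    x = single (s * e * t) (1 : ℂ) - single (s * t) (1 : ℂ) }

variable {S}

theorem mul_mem_J (f : MonoidAlgebra ℂ S) {x : MonoidAlgebra ℂ S} (hx : x ∈ J S) :
    f * x ∈ J S := by
  induction hx using Submodule.span_induction with
  | mem x hx =>
    obtain ⟨s, t, e, he, rfl⟩ := hx
    induction f using MonoidAlgebra.induction_linear with
    | zero => simp
    | add a b ha hb => rw [add_mul]; exact (J S).add_mem ha hb
    | single a b =>
      have : (single a b : MonoidAlgebra ℂ S) *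
            (single (s * e * t) (1 : ℂ) - single (s * t) (1 : ℂ))
          = b • (single ((a * s) * e * t) (1 : ℂ) - single ((a * s) * t) (1 : ℂ)) := by
        rw [mul_sub, single_mul_single, single_mul_single, smul_sub, smul_single', smul_single']
        simp [mul_assoc]
      rw [this]
      exact (J S).smul_mem _ (Submodule.subset_span ⟨a * s, t, e, he, rfl⟩)
  | zero => simp
  | add x y hx hy ihx ihy => rw [mul_add]; exact (J S).add_mem ihx ihy
  | smul c x hx ih => rw [mul_smul_comm]; exact (J S).smul_mem _ ih

theorem J_mul_mem (f : MonoidAlgebra ℂ S) {x : MonoidAlgebra ℂ S} (hx : x ∈ J S) :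
    x * f ∈ J S := by
  induction hx using Submodule.span_induction with
  | mem x hx =>
    obtain ⟨s, t, e, he, rfl⟩ := hx
    induction f using MonoidAlgebra.induction_linear with
    | zero => simp
    | add a b ha hb => rw [mul_add]; exact (J S).add_mem ha hb
    | single a b =>
      have : (single (s * e * t) (1 : ℂ) - single (s * t) (1 : ℂ)) *
            (single a b : MonoidAlgebra ℂ S)
          = b • (single (s * e * (t * a)) (1 : ℂ) - single (s * (t * a)) (1 : ℂ)) := by
        rw [sub_mul, single_mul_single, single_mul_single, smul_sub, smul_single', smul_single']
        simp [mul_assoc]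
      rw [this]
      exact (J S).smul_mem _ (Submodule.subset_span ⟨s, t * a, e, he, rfl⟩)
  | zero => simp
  | add x y hx hy ihx ihy => rw [add_mul]; exact (J S).add_mem ihx ihy
  | smul c x hx ih => rw [smul_mul_assoc]; exact (J S).smul_mem _ ih

/-- Multiplication of cosets in the quotient algebra `A ⧸ J`, well defined
since `J` is a two-sided ideal: `(f + J) * (g + J) = f * g + J`. -/
noncomputable instance : Mul (MonoidAlgebra ℂ S ⧸ J S) :=
  ⟨Quotient.map₂' (· * ·) (by
    intro a₁ a₂ h₁ b₁ b₂ h₂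
    have h₁' : a₁ - a₂ ∈ J S := (Submodule.quotientRel_def (J S)).mp h₁
    have h₂' : b₁ - b₂ ∈ J S := (Submodule.quotientRel_def (J S)).mp h₂
    refine (Submodule.quotientRel_def (J S)).mpr ?_
    have : a₁ * b₁ - a₂ * b₂ = a₁ * (b₁ - b₂) + (a₁ - a₂) * b₂ := by
      rw [mul_sub, sub_mul]; abel
    rw [this]
    exact (J S).add_mem (mul_mem_J _ h₂') (J_mul_mem _ h₁'))⟩

variable (S)

/-- The quotient map `π : A → A ⧸ J`, sending `f` to the coset `f + J`. -/
noncomputable def π : MonoidAlgebra ℂ S → MonoidAlgebra ℂ S ⧸ J S := Submodule.Quotient.mk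

theorem π_mul (f g : MonoidAlgebra ℂ S) : π S (f * g) = π S f * π S g := rfl

variable {S}

section AuxLemmas

open InverseSemigroup

variable {S : Type*} [InverseSemigroup S]

lemma isg_idem_star {e : S} (he : e * e = e) : star e = e :=
  (star_unique e e (by rw [he, he]) (by rw [he, he])).symm

lemma isg_idem_cancel {e : S} (he : e * e = e) (z : S) : e * (e * z) = e * z := by
  rw [← mul_assoc, he]

lemma isg_mul_star_idem (s : S) : (s * star s) * (s * star s) = s * star s := by
  have h := congrArg (· * star s) (star_left s)
  simpa [mul_assoc] using h

lemma isg_star_mul_idem (s : S) : (star s * s) * (star s * s) = star s * s := by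
  have h := congrArg (star s * ·) (star_left s)
  simpa [mul_assoc] using h

lemma isg_idem_mul_idem {e f : S} (he : e * e = e) (hf : f * f = f) :
    (e * f) * (e * f) = e * f := by
  set x := star (e * f) with hx
  have hsr : ∀ z : S, x * (e * (f * (x * z))) = x * z := by
    intro z
    have h := congrArg (· * z) (star_right (e * f))
    simpa [mul_assoc] using h
  have hy1 : (e * f) * (f * (x * e)) * (e * f) = e * f := by
    simp only [mul_assoc]
    rw [isg_idem_cancel hf, isg_idem_cancel he]
    have h' : e * (f * (x * (e * f))) = e * f := by
      simpa [mul_assoc] using star_left (e * f)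
    exact h'
  have hy2 : (f * (x * e)) * (e * f) * (f * (x * e)) = f * (x * e) := by
    simp only [mul_assoc]
    rw [isg_idem_cancel he, isg_idem_cancel hf, hsr]
  have hy := star_unique (e * f) (f * (x * e)) hy1 hy2
  have hxx : x * x = x := by
    have h : (f * (x * e)) * (f * (x * e)) = f * (x * e) := by
      simp only [mul_assoc]; rw [hsr]
    rw [hy] at h; exact h
  have hfx : e * f = x :=
    (star_unique x (e * f) (star_right (e * f)) (star_left (e * f))).trans
      (isg_idem_star hxx)
  rw [hfx]; exact hxx

lemma isg_idem_comm {e f : S} (he : e * e = e) (hf : f * f = f) : e * f = f * e := by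
  have hef := isg_idem_mul_idem he hf
  have hfe := isg_idem_mul_idem hf he
  have h1 : (e * f) * (f * e) * (e * f) = e * f := by
    simp only [mul_assoc]
    rw [isg_idem_cancel hf, isg_idem_cancel he]
    simpa [mul_assoc] using hef
  have h2 : (f * e) * (e * f) * (f * e) = f * e := by
    simp only [mul_assoc]
    rw [isg_idem_cancel he, isg_idem_cancel hf]
    simpa [mul_assoc] using hfe
  have h := star_unique (e * f) (f * e) h1 h2
  rw [h, isg_idem_star hef]

lemma isg_comm_cancel {e f : S} (he : e * e = e) (hf : f * f = f) (z : S) :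
    e * (f * z) = f * (e * z) := by
  rw [← mul_assoc, isg_idem_comm he hf, mul_assoc]

lemma isg_star_mul (s t : S) : star (s * t) = star t * star s := by
  have hf := isg_mul_star_idem t
  have hg := isg_star_mul_idem s
  have h1 : (s * t) * (star t * star s) * (s * t) = s * t := by
    have e1 : (s * t) * (star t * star s) * (s * t)
        = s * ((t * star t) * ((star s * s) * t)) := by simp [mul_assoc]
    rw [e1, isg_comm_cancel hf hg, star_left]
    have e2 : s * ((star s * s) * t) = (s * star s * s) * t := by simp [mul_assoc]
    rw [e2, star_left]
  have h2 : (star t * star s) * (s * t) * (star t * star s) = star t * star s := by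
    have e1 : (star t * star s) * (s * t) * (star t * star s)
        = star t * ((star s * s) * ((t * star t) * star s)) := by simp [mul_assoc]
    rw [e1, isg_comm_cancel hg hf, star_right]
    have e2 : star t * ((t * star t) * star s) = (star t * t * star t) * star s := by
      simp [mul_assoc]
    rw [e2, star_right]
  exact (star_unique (s * t) (star t * star s) h1 h2).symm

lemma isg_conj_idem (u : S) {e : S} (he : e * e = e) :
    (star u * e * u) * (star u * e * u) = star u * e * u := by
  have e1 : (star u * e * u) * (star u * e * u)
      = star u * (e * ((u * star u) * (e * u))) := by simp [mul_assoc]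
  rw [e1, isg_comm_cancel (isg_mul_star_idem u) he, isg_idem_cancel he, star_left]
  simp [mul_assoc]

lemma isg_key_eq (u : S) {e : S} (he : e * e = e) :
    u * (star u * e * u) * (star u * u) = e * u := by
  have e1 : u * (star u * e * u) * (star u * u)
      = u * (star u * (e * ((u * star u) * u))) := by simp [mul_assoc]
  rw [e1, star_left, ← mul_assoc u (star u) (e * u),
    isg_comm_cancel (isg_mul_star_idem u) he, star_left]

lemma isg_u_ss (u : S) : u * (star u * u) = u := by
  rw [← mul_assoc, star_left]

lemma π_idem_mul (u : S) {e : S} (he : e * e = e) :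
    π S (single (e * u) (1 : ℂ)) = π S (single u (1 : ℂ)) := by
  refine (Submodule.Quotient.eq _).mpr ?_
  exact Submodule.subset_span ⟨u, star u * u, star u * e * u, isg_conj_idem u he,
    by rw [isg_key_eq u he, isg_u_ss]⟩

lemma π_surj (x : MonoidAlgebra ℂ S ⧸ J S) : ∃ f, π S f = x :=
  Submodule.Quotient.mk_surjective _ x

lemma qπ_add (f g : MonoidAlgebra ℂ S) : π S (f + g) = π S f + π S g :=
  Submodule.Quotient.mk_add _

lemma qmul_assoc (a b c : MonoidAlgebra ℂ S ⧸ J S) : a * b * c = a * (b * c) := by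
  obtain ⟨f, rfl⟩ := π_surj a
  obtain ⟨g, rfl⟩ := π_surj b
  obtain ⟨h, rfl⟩ := π_surj c
  rw [← π_mul, ← π_mul, ← π_mul, ← π_mul, mul_assoc]

lemma qmul_add (a b c : MonoidAlgebra ℂ S ⧸ J S) : a * (b + c) = a * b + a * c := by
  obtain ⟨f, rfl⟩ := π_surj a
  obtain ⟨g, rfl⟩ := π_surj b
  obtain ⟨h, rfl⟩ := π_surj c
  rw [← qπ_add, ← π_mul, ← π_mul, ← π_mul, mul_add, qπ_add]

lemma qadd_mul (a b c : MonoidAlgebra ℂ S ⧸ J S) : (a + b) * c = a * c + b * c := by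
  obtain ⟨f, rfl⟩ := π_surj a
  obtain ⟨g, rfl⟩ := π_surj b
  obtain ⟨h, rfl⟩ := π_surj c
  rw [← qπ_add, ← π_mul, ← π_mul, ← π_mul, add_mul, qπ_add]

lemma single_mul_single' (a b : S) :
    (single a (1 : ℂ) : MonoidAlgebra ℂ S) * single b (1 : ℂ) = single (a * b) (1 : ℂ) := by
  rw [single_mul_single, one_mul]

lemma qσ_mul (a b : S) :
    π S (single a (1 : ℂ)) * π S (single b (1 : ℂ)) = π S (single (a * b) (1 : ℂ)) := by
  rw [← π_mul, single_mul_single']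

end AuxLemmas

/-- with `D`, `φ` as before and `T_s(Φ) = π(δ_s) · Φ · π(δ_{s*}) + φ(s)`,
the family `{T_s : s ∈ S}` is a representation of `S`: `T_{s t}(Φ) = T_s(T_t(Φ))` for all
`s, t ∈ S`, `Φ ∈ A ⧸ J`; moreover `T_s(φ(t)) = φ(s t)`. -/
theorem T_is_representation
    (D : MonoidAlgebra ℂ S →ₗ[ℂ] MonoidAlgebra ℂ S ⧸ J S)
    (hD : ∀ f g : MonoidAlgebra ℂ S, D (f * g) = π S f * D g + D f * π S g)
    (φ : S → MonoidAlgebra ℂ S ⧸ J S)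
    (hφ : ∀ s : S, φ s = D (single s (1 : ℂ)) * π S (single (InverseSemigroup.star s) (1 : ℂ)))
    (T : S → (MonoidAlgebra ℂ S ⧸ J S) → MonoidAlgebra ℂ S ⧸ J S)
    (hT : ∀ (s : S) (Φ : MonoidAlgebra ℂ S ⧸ J S),
      T s Φ = π S (single s (1 : ℂ)) * Φ * π S (single (InverseSemigroup.star s) (1 : ℂ)) + φ s)
 :
    (∀ (s t : S) (Φ : MonoidAlgebra ℂ S ⧸ J S), T (s * t) Φ = T s (T t Φ)) ∧
    (∀ s t : S, T s (φ t) = φ (s * t)) := by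
  have key : ∀ s t : S, φ (s * t) =
      π S (single s (1 : ℂ)) * φ t * π S (single (InverseSemigroup.star s) (1 : ℂ)) + φ s := by
    intro s t
    rw [hφ (s * t), hφ t, hφ s, isg_star_mul, ← single_mul_single' s t, hD,
      ← single_mul_single' (InverseSemigroup.star t) (InverseSemigroup.star s), π_mul, qadd_mul]
    congr 1
    · simp only [qmul_assoc]
    · rw [qmul_assoc, qσ_mul (InverseSemigroup.star t) (InverseSemigroup.star s),
        qσ_mul t (InverseSemigroup.star t * InverseSemigroup.star s),
        show t * (InverseSemigroup.star t * InverseSemigroup.star s)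
          = (t * InverseSemigroup.star t) * InverseSemigroup.star s from (mul_assoc _ _ _).symm,
        π_idem_mul (InverseSemigroup.star s) (isg_mul_star_idem t)]
  refine ⟨?_, ?_⟩
  · intro s t Φ
    rw [hT (s * t) Φ, hT s (T t Φ), hT t Φ, key, isg_star_mul, ← qσ_mul s t,
      ← qσ_mul (InverseSemigroup.star t) (InverseSemigroup.star s), qmul_add, qadd_mul]
    simp only [qmul_assoc, add_assoc]
  · intro s t
    rw [hT s (φ t)]
    exact (key s t).symm
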